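/- arXiv:1202.0430 — 3 statements merged into one kernel-verified Lean document; each statement's English description precedes it below -/
import Mathlib

section
/- (Integrability condition of the Buchert equations.) Let a, μ, R, Q : I → ℝ be differentiable functions on an interval I with a > 0, satisfying: (i) 3·a''/a = -½μ + Q (averaged Raychaudhuri), (ii) 3·(a'/a)² = μ - ½R - ½Q (averaged Hamiltonian constraint), and (iii) μ' + 3(a'/a)·μ = 0 (averaged continuity). Then, writing H = a'/a, the integrability condition ∂_t R + 2H·R = -∂_t Q - 6H·Q holds on I. -/
/-- Integrability condition of the Buchert equations: if `a, μ, R, Q` are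
differentiable on an open interval `I` with `a > 0` and satisfy the averaged
Raychaudhuri equation, the averaged Hamiltonian constraint, and the averaged
continuity equation, then with `H = a'/a` one has
`∂_t R + 2H·R = -∂_t Q - 6H·Q` on `I`. -/
theorem buchert_integrability_condition
    (I : Set ℝ) (hI : IsOpen I) (hconn : I.OrdConnected)
    (a a' a'' μ μ' R R' Q Q' : ℝ → ℝ)
    (ha : ∀ t ∈ I, HasDerivAt a (a' t) t)
    (ha' : ∀ t ∈ I, HasDerivAt a' (a'' t) t)
    (hμ : ∀ t ∈ I, HasDerivAt μ (μ' t) t)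
    (hR : ∀ t ∈ I, HasDerivAt R (R' t) t)
    (hQ : ∀ t ∈ I, HasDerivAt Q (Q' t) t)
    (hapos : ∀ t ∈ I, 0 < a t)
    (hray : ∀ t ∈ I, 3 * a'' t / a t = -(1 / 2) * μ t + Q t)
    (hham : ∀ t ∈ I, 3 * (a' t / a t) ^ 2 = μ t - (1 / 2) * R t - (1 / 2) * Q t)
    (hcont : ∀ t ∈ I, μ' t + 3 * (a' t / a t) * μ t = 0) :
    ∀ t ∈ I, R' t + 2 * (a' t / a t) * R t
      = -(Q' t) - 6 * (a' t / a t) * Q t := by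
  intro t ht
  have hane : a t ≠ 0 := ne_of_gt (hapos t ht)
  -- f := 3*(a'/a)^2 - μ + (1/2)R + (1/2)Q vanishes on I
  set f : ℝ → ℝ := fun s => 3 * (a' s / a s) ^ 2 - μ s + (1 / 2) * R s + (1 / 2) * Q s
    with hfdef
  have hg : HasDerivAt (fun s => a' s / a s)
      ((a'' t * a t - a' t * a' t) / (a t) ^ 2) t :=
    (ha' t ht).div (ha t ht) hane
  have hg2 : HasDerivAt (fun s => (a' s / a s) ^ 2)
      (2 * (a' t / a t) ^ 1 * ((a'' t * a t - a' t * a' t) / (a t) ^ 2)) t := by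
    simpa using hg.fun_pow 2
  have hf : HasDerivAt f
      (3 * (2 * (a' t / a t) ^ 1 * ((a'' t * a t - a' t * a' t) / (a t) ^ 2))
        - μ' t + (1 / 2) * R' t + (1 / 2) * Q' t) t := by
    exact (((hg2.const_mul 3).sub (hμ t ht)).add ((hR t ht).const_mul (1/2))).add
      ((hQ t ht).const_mul (1/2))
  have hf0 : HasDerivAt f 0 t := by
    have hev : f =ᶠ[nhds t] (fun _ => (0:ℝ)) := by
      filter_upwards [hI.mem_nhds ht] with s hs
      have := hham s hs
      simp only [hfdef]
      linarith
    exact (hasDerivAt_const t (0:ℝ)).congr_of_eventuallyEq hev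
  have hD : 3 * (2 * (a' t / a t) ^ 1 * ((a'' t * a t - a' t * a' t) / (a t) ^ 2))
        - μ' t + (1 / 2) * R' t + (1 / 2) * Q' t = 0 := hf.unique hf0
  have h1 := hray t ht
  have h2 := hham t ht
  have h3 := hcont t ht
  field_simp at hD h1 h2 h3 ⊢
  have key : (2 * (a t)^2) * (R' t * a t + 2 * a' t * R t)
      = (2 * (a t)^2) * (-(Q' t * a t) - 6 * a' t * Q t) := by
    linear_combination 2 * hD - (4 * a' t * a t) * h1 + (4 * a' t) * h2 + (4 * (a t)^2) * h3
  have key' := mul_left_cancel₀ (by positivity : (2 * (a t)^2) ≠ 0) key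
  linear_combination key'
end

section
/- (N-dimensional integrability condition.) Let N ≥ 2 and let a, μ, R, Q : I → ℝ be differentiable with a > 0, satisfying: (i) N·a''/a = ((N-2)/(1-N))·μ + Q + (2/(N-1))·Λ, (ii) (N(N-1)/2)·(a'/a)² = μ - ½R - ½Q + Λ, (iii) μ' + N(a'/a)·μ = 0, where Λ is a real constant. Then with H = a'/a one has 2N·H·Q + Q' = -2H·R - R'; in particular the cosmological constant Λ cancels from the integrability condition. -/
/-- The (N+1)-dimensional integrability condition: for `N ≥ 2` and
differentiable `a, μ, R, Q` on an open interval `I` with `a > 0`, satisfying the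
averaged N-dimensional Raychaudhuri equation, Hamiltonian constraint and
continuity equation (with cosmological constant `Λ`), one has, with `H = a'/a`,
`2N·H·Q + Q' = -2H·R - R'`; in particular `Λ` cancels out. -/
theorem buchert_integrability_condition_N
    (N : ℕ) (hN : 2 ≤ N) (Λ : ℝ)
    (I : Set ℝ) (hI : IsOpen I) (hconn : I.OrdConnected)
    (a a' a'' μ μ' R R' Q Q' : ℝ → ℝ)
    (ha : ∀ t ∈ I, HasDerivAt a (a' t) t)
    (ha' : ∀ t ∈ I, HasDerivAt a' (a'' t) t)
    (hμ : ∀ t ∈ I, HasDerivAt μ (μ' t) t)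
    (hR : ∀ t ∈ I, HasDerivAt R (R' t) t)
    (hQ : ∀ t ∈ I, HasDerivAt Q (Q' t) t)
    (hapos : ∀ t ∈ I, 0 < a t)
    (hray : ∀ t ∈ I, N * a'' t / a t
      = ((N : ℝ) - 2) / (1 - (N : ℝ)) * μ t + Q t + 2 / ((N : ℝ) - 1) * Λ)
    (hham : ∀ t ∈ I, (N : ℝ) * ((N : ℝ) - 1) / 2 * (a' t / a t) ^ 2
      = μ t - (1 / 2) * R t - (1 / 2) * Q t + Λ)
    (hcont : ∀ t ∈ I, μ' t + N * (a' t / a t) * μ t = 0) :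
    ∀ t ∈ I, 2 * N * (a' t / a t) * Q t + Q' t
      = -2 * (a' t / a t) * R t - R' t := by
  intro t ht
  have haN : (2:ℝ) ≤ (N:ℝ) := by exact_mod_cast hN
  have hN1 : (N:ℝ) - 1 ≠ 0 := by linarith
  have hN1' : 1 - (N:ℝ) ≠ 0 := by linarith
  have hat : a t ≠ 0 := ne_of_gt (hapos t ht)
  -- derivative of LHS of Hamiltonian constraint
  have hdivd : HasDerivAt (fun s => a' s / a s)
      ((a'' t * a t - a' t * a' t) / (a t) ^ 2) t :=
    (ha' t ht).div (ha t ht) hat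
  have hlhs : HasDerivAt (fun s => (N : ℝ) * ((N : ℝ) - 1) / 2 * (a' s / a s) ^ 2)
      ((N : ℝ) * ((N : ℝ) - 1) / 2 *
        (2 * (a' t / a t) * ((a'' t * a t - a' t * a' t) / (a t) ^ 2))) t := by
    have := (hdivd.pow 2).const_mul ((N : ℝ) * ((N : ℝ) - 1) / 2)
    simpa [mul_comm, mul_assoc, mul_left_comm] using this
  have hrhs : HasDerivAt (fun s => μ s - (1 / 2) * R s - (1 / 2) * Q s + Λ)
      (μ' t - (1 / 2) * R' t - (1 / 2) * Q' t) t := by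
    simpa using (((hμ t ht).sub ((hR t ht).const_mul (1/2:ℝ))).sub
      ((hQ t ht).const_mul (1/2:ℝ))).add_const Λ
  have heq : (fun s => (N : ℝ) * ((N : ℝ) - 1) / 2 * (a' s / a s) ^ 2)
      =ᶠ[nhds t] (fun s => μ s - (1 / 2) * R s - (1 / 2) * Q s + Λ) := by
    filter_upwards [hI.mem_nhds ht] with s hs using hham s hs
  have hlhs' := hlhs.congr_of_eventuallyEq heq.symm
  have hderiv := hrhs.unique hlhs'
  -- rewrite the quotient in the derivative
  have e1 : (a'' t * a t - a' t * a' t) / (a t) ^ 2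
      = a'' t / a t - (a' t / a t) ^ 2 := by
    field_simp
  rw [e1] at hderiv
  -- algebraic consequences of the field equations
  have h1 := hray t ht
  have key : (N : ℝ) * ((N : ℝ) - 1) * (a'' t / a t)
      = -((N : ℝ) - 2) * μ t + ((N : ℝ) - 1) * Q t + 2 * Λ := by
    field_simp at h1 ⊢
    nlinarith [h1]
  have key2 : (N : ℝ) * ((N : ℝ) - 1) * (a' t / a t) ^ 2
      = 2 * μ t - R t - Q t + 2 * Λ := by
    linear_combination 2 * hham t ht
  have h3 := hcont t ht
  linear_combination (-2) * hderiv + (-2) * (a' t / a t) * key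
    + 2 * (a' t / a t) * key2 + 2 * h3
end

section
/- (Backreaction in 2+1 dimensions is constrained to a^{-4}.) Let a, Q : I → ℝ be differentiable with a > 0, H = a'/a, and suppose the average spatial curvature is R(t) = C·a(t)^{-2} for a constant C (as forced by the Gauss–Bonnet theorem on a compact averaging surface), and that the 2-dimensional integrability condition 4H·Q + Q' = -2H·R - R' holds on I. Then a⁴·Q is constant on I, i.e. Q(t) = A·a(t)^{-4} for some constant A. -/
/-- Backreaction in 2+1 dimensions is constrained to `a^{-4}`: if the average
spatial curvature is `R = C·a^{-2}` (as forced by Gauss–Bonnet on a compact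
averaging surface) and the 2-dimensional integrability condition
`4H·Q + Q' = -2H·R - R'` holds (with `H = a'/a`), then `a⁴·Q` is constant, i.e.
`Q(t) = A·a(t)^{-4}` for some constant `A`. -/
theorem backreaction_two_plus_one
    (I : Set ℝ) (hI : IsOpen I) (hconn : I.OrdConnected)
    (a a' Q Q' R R' : ℝ → ℝ) (C : ℝ)
    (ha : ∀ t ∈ I, HasDerivAt a (a' t) t)
    (hQd : ∀ t ∈ I, HasDerivAt Q (Q' t) t)
    (hRd : ∀ t ∈ I, HasDerivAt R (R' t) t)
    (hapos : ∀ t ∈ I, 0 < a t)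
    (hRC : ∀ t ∈ I, R t = C / a t ^ 2)
    (hic : ∀ t ∈ I, 4 * (a' t / a t) * Q t + Q' t
      = -2 * (a' t / a t) * R t - R' t) :
    (∀ t ∈ I, ∀ s ∈ I, a t ^ 4 * Q t = a s ^ 4 * Q s) ∧
    ∃ A : ℝ, ∀ t ∈ I, Q t = A / a t ^ 4 := by
  have hconv : Convex ℝ I := convex_iff_ordConnected.mpr hconn
  -- value of R'
  have hR' : ∀ t ∈ I, R' t = -2 * C * a' t / a t ^ 3 := by
    intro t ht
    have hane : a t ≠ 0 := (hapos t ht).ne'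
    have h1 : HasDerivAt (fun u => C / a u ^ 2)
        (-(C * (2 * a t * a' t)) / (a t ^ 2) ^ 2) t := by
      have := (hasDerivAt_const t C).div (((ha t ht).pow 2)) (pow_ne_zero 2 hane)
      convert this using 1
      all_goals try rfl
      all_goals norm_num
    have heq : R =ᶠ[nhds t] fun u => C / a u ^ 2 := by
      filter_upwards [hI.mem_nhds ht] with u hu using hRC u hu
    have h2 : HasDerivAt R (-(C * (2 * a t * a' t)) / (a t ^ 2) ^ 2) t :=
      h1.congr_of_eventuallyEq heq
    have := (hRd t ht).unique h2
    rw [this]; field_simp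
  -- derivative of a^4 * Q is zero
  have hf : ∀ t ∈ I, HasDerivWithinAt (fun u => a u ^ 4 * Q u) 0 I t := by
    intro t ht
    have hane : a t ≠ 0 := (hapos t ht).ne'
    have hD : HasDerivAt (fun u => a u ^ 4 * Q u)
        (4 * a t ^ 3 * a' t * Q t + a t ^ 4 * Q' t) t := by
      have := ((ha t ht).pow 4).mul (hQd t ht)
      convert this using 1
      all_goals try rfl
    have hz : 4 * a t ^ 3 * a' t * Q t + a t ^ 4 * Q' t = 0 := by
      have h := hic t ht
      rw [hRC t ht, hR' t ht] at h
      field_simp at h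
      have hX : a t * a t ^ 2 * a t ^ 3 ≠ 0 := by
        exact mul_ne_zero (mul_ne_zero hane (pow_ne_zero 2 hane)) (pow_ne_zero 3 hane)
      have h0 : (4 * a' t * Q t + Q' t * a t) * (a t * a t ^ 2 * a t ^ 3) = 0 := by
        linear_combination (a t ^ 4) * h
      rcases mul_eq_zero.mp h0 with h1 | h2
      · have hrw : 4 * a t ^ 3 * a' t * Q t + a t ^ 4 * Q' t
            = a t ^ 3 * (4 * a' t * Q t + Q' t * a t) := by ring
        rw [hrw, h1, mul_zero]
      · exact absurd h2 hX
    rw [hz] at hD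
    exact hD.hasDerivWithinAt
  have hconst : ∀ t ∈ I, ∀ s ∈ I, a t ^ 4 * Q t = a s ^ 4 * Q s := by
    intro t ht s hs
    have := hconv.norm_image_sub_le_of_norm_hasDerivWithin_le
      (f := fun u => a u ^ 4 * Q u) (f' := fun _ => 0) (C := 0)
      hf (fun x _ => by simp) hs ht
    simp at this
    linarith [this, abs_nonneg (a t ^ 4 * Q t - a s ^ 4 * Q s),
      abs_le.mp (le_of_eq rfl : |a t ^ 4 * Q t - a s ^ 4 * Q s| ≤ |a t ^ 4 * Q t - a s ^ 4 * Q s|)]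
  refine ⟨hconst, ?_⟩
  rcases Set.eq_empty_or_nonempty I with h | ⟨t₀, ht₀⟩
  · exact ⟨0, by simp [h]⟩
  · refine ⟨a t₀ ^ 4 * Q t₀, fun t ht => ?_⟩
    have hane : a t ≠ 0 := (hapos t ht).ne'
    have := hconst t ht t₀ ht₀
    field_simp
    linarith [this]
end
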